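/- arXiv:2105.11927 — 5 statements merged into one kernel-verified Lean document; each statement's English description precedes it below -/
import Mathlib

section
/- Let y ≥ 0 and τ ≥ 0 be real numbers with (1 + y)² < 4τ, and define f : [0, ∞) → ℝ by f(x) = (1/2)(x − y)² + τ·log(1 + x). Then f is strictly increasing on [0, ∞), and hence x = 0 is the unique global minimizer of f over [0, ∞). -/
/-- If `(1+y)² < 4τ`, the scalar objective `f(x) = (1/2)(x-y)^2 + τ log(1+x)` is strictly
increasing on `[0, ∞)`, hence `0` is its unique global minimizer there. -/
theorem stmt1 (y τ : ℝ) (hy : 0 ≤ y) (hτ : 0 ≤ τ) (h : (1 + y)^2 < 4 * τ)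
    (f : ℝ → ℝ) (hf : ∀ x : ℝ, f x = (1/2) * (x - y)^2 + τ * Real.log (1 + x)) :
    StrictMonoOn f (Set.Ici (0 : ℝ)) ∧
    ∀ x : ℝ, 0 ≤ x → x ≠ 0 → f 0 < f x := by
  have hfe : f = fun x => (1/2) * (x - y)^2 + τ * Real.log (1 + x) := funext hf
  have key : ∀ x : ℝ, 0 ≤ x → 0 < (x - y) + τ * (1 + x)⁻¹ := by
    intro x hx
    have hx1 : (0:ℝ) < 1 + x := by linarith
    have hquad : 0 < (x - y) * (1 + x) + τ := by nlinarith [sq_nonneg (2*x + 1 - y)]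
    have : 0 < ((x - y) * (1 + x) + τ) * (1 + x)⁻¹ :=
      mul_pos hquad (inv_pos.mpr hx1)
    calc (0:ℝ) < ((x - y) * (1 + x) + τ) * (1 + x)⁻¹ := this
      _ = (x - y) + τ * (1 + x)⁻¹ := by field_simp
  have hderiv : ∀ x ∈ Set.Ici (0:ℝ), HasDerivAt f ((x - y) + τ * (1 + x)⁻¹) x := by
    intro x hx
    have hx1 : (1 + x) ≠ 0 := ne_of_gt (by have h0 : (0:ℝ) ≤ x := hx; linarith)
    rw [hfe]
    have h1 : HasDerivAt (fun x : ℝ => (1/2) * (x - y)^2) (x - y) x := by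
      have : HasDerivAt (fun x : ℝ => x - y) 1 x := (hasDerivAt_id x).sub_const y
      simpa using ((this.pow 2).const_mul (1/2 : ℝ))
    have h2 : HasDerivAt (fun x : ℝ => τ * Real.log (1 + x)) (τ * (1 + x)⁻¹) x := by
      have : HasDerivAt (fun x : ℝ => 1 + x) 1 x := (hasDerivAt_id x).const_add 1
      simpa using ((this.log hx1).const_mul τ)
    exact h1.add h2
  have hmono : StrictMonoOn f (Set.Ici (0:ℝ)) := by
    apply strictMonoOn_of_hasDerivWithinAt_pos (convex_Ici 0)
    · exact fun x hx => (hderiv x hx).continuousAt.continuousWithinAt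
    · intro x hx
      rw [interior_Ici] at hx
      exact ((hderiv x (Set.mem_Ici.mpr (le_of_lt hx))).hasDerivWithinAt)
    · intro x hx
      rw [interior_Ici] at hx
      exact key x (le_of_lt hx)
  refine ⟨hmono, fun x hx hne => ?_⟩
  exact hmono (Set.mem_Ici.mpr (le_refl 0)) hx (lt_of_le_of_ne hx (Ne.symm hne))
end

section
/- Let y ≥ 0 and τ ≥ 0 be real numbers with (1 + y)² > 4τ, define f(x) = (1/2)(x − y)² + τ·log(1 + x) for x ≥ 0, and set ξ = (y − 1)/2 + √((1 + y)²/4 − τ). If ξ > 0 and f(ξ) ≤ f(0) = y²/2, then ξ is a global minimizer of f over [0, ∞); otherwise (i.e., if ξ ≤ 0 or f(ξ) > y²/2), 0 is a global minimizer of f over [0, ∞). -/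
/-- If `(1+y)² > 4τ` and `ξ = (y-1)/2 + √((1+y)²/4 - τ)`: when `ξ > 0` and `f(ξ) ≤ f(0) = y²/2`,
`ξ` is a global minimizer of `f` over `[0, ∞)`; otherwise `0` is a global minimizer. -/
theorem stmt2 (y τ : ℝ) (hy : 0 ≤ y) (hτ : 0 ≤ τ) (h : (1 + y)^2 > 4 * τ)
    (f : ℝ → ℝ) (hf : ∀ x : ℝ, f x = (1/2) * (x - y)^2 + τ * Real.log (1 + x))
    (ξ : ℝ) (hξ : ξ = (y - 1)/2 + Real.sqrt ((1 + y)^2/4 - τ)) :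
    (ξ > 0 → f ξ ≤ y^2/2 → ∀ x : ℝ, 0 ≤ x → f ξ ≤ f x) ∧
    ((ξ ≤ 0 ∨ f ξ > y^2/2) → ∀ x : ℝ, 0 ≤ x → f 0 ≤ f x) := by
  have hs0 : (0:ℝ) ≤ (1+y)^2/4 - τ := by nlinarith
  set s := Real.sqrt ((1+y)^2/4 - τ) with hsdef
  have hs2 : s^2 = (1+y)^2/4 - τ := Real.sq_sqrt hs0
  have hsnn : 0 ≤ s := Real.sqrt_nonneg _
  set ξ₂ := (y-1)/2 - s with hξ₂
  have hle : ξ₂ ≤ ξ := by rw [hξ]; simp [hξ₂]; linarith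
  have hf0 : f 0 = y^2/2 := by rw [hf]; simp [Real.log_one]; ring
  -- derivative
  have hder : ∀ x : ℝ, 0 ≤ x → HasDerivAt f ((x - y) + τ / (1+x)) x := by
    intro x hx
    have hx1 : (0:ℝ) < 1 + x := by linarith
    have h1 : HasDerivAt (fun x : ℝ => (1/2) * (x - y)^2) (x - y) x := by
      have := (((hasDerivAt_id x).sub_const y).pow 2).const_mul (1/2 : ℝ)
      exact this.congr_deriv (by simp)
    have h2 : HasDerivAt (fun x : ℝ => Real.log (1 + x)) (1/(1+x)) x := by
      have hin : HasDerivAt (fun x : ℝ => 1 + x) 1 x := by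
        simpa using (hasDerivAt_id x).const_add 1
      have := (Real.hasDerivAt_log hx1.ne').comp x hin
      rw [one_div, ← mul_one (1+x)⁻¹]; exact this
    have := h1.add (h2.const_mul τ)
    have heq : f = fun x => (1/2) * (x - y)^2 + τ * Real.log (1 + x) := funext hf
    rw [heq]
    exact this.congr_deriv (by ring)
  have hc : ContinuousOn f (Set.Ici (0:ℝ)) := fun x hx =>
    ((hder x hx).differentiableAt).continuousAt.continuousWithinAt
  have hkey : ∀ x : ℝ, 0 ≤ x → deriv f x = (x - ξ) * (x - ξ₂) / (1+x) := by
    intro x hx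
    have hx1 : (0:ℝ) < 1 + x := by linarith
    rw [(hder x hx).deriv, hξ, hξ₂]
    field_simp
    nlinarith [hs2]
  -- monotone on [max 0 ξ, ∞)
  have monoA : MonotoneOn f (Set.Ici (max 0 ξ)) := by
    apply monotoneOn_of_deriv_nonneg (convex_Ici _)
      (hc.mono (Set.Ici_subset_Ici.mpr (le_max_left _ _)))
    · intro x hx
      rw [interior_Ici] at hx
      have hx0 : (0:ℝ) ≤ x := le_of_lt (lt_of_le_of_lt (le_max_left _ _) hx)
      exact (hder x hx0).differentiableAt.differentiableWithinAt
    · intro x hx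
      rw [interior_Ici] at hx
      have hx0 : (0:ℝ) ≤ x := le_of_lt (lt_of_le_of_lt (le_max_left _ _) hx)
      have hxξ : ξ ≤ x := le_of_lt (lt_of_le_of_lt (le_max_right _ _) hx)
      rw [hkey x hx0]
      apply div_nonneg (mul_nonneg (by linarith) (by linarith)) (by linarith)
  -- monotone on [0, ξ₂]
  have monoB : MonotoneOn f (Set.Icc 0 ξ₂) := by
    apply monotoneOn_of_deriv_nonneg (convex_Icc _ _)
      (hc.mono (fun x hx => hx.1))
    · intro x hx
      rw [interior_Icc] at hx
      exact (hder x hx.1.le).differentiableAt.differentiableWithinAt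
    · intro x hx
      rw [interior_Icc] at hx
      rw [hkey x hx.1.le]
      exact div_nonneg (by nlinarith [hx.2, hle, hx.1]) (by linarith [hx.1])
  -- antitone on [max 0 ξ₂, max 0 ξ]
  have monoC : AntitoneOn f (Set.Icc (max 0 ξ₂) (max 0 ξ)) := by
    apply antitoneOn_of_deriv_nonpos (convex_Icc _ _)
      (hc.mono (fun x hx => le_trans (le_max_left _ _) hx.1))
    · intro x hx
      rw [interior_Icc] at hx
      have hx0 : (0:ℝ) ≤ x := le_of_lt (lt_of_le_of_lt (le_max_left _ _) hx.1)
      exact (hder x hx0).differentiableAt.differentiableWithinAt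
    · intro x hx
      rw [interior_Icc] at hx
      have hx0 : (0:ℝ) ≤ x := le_of_lt (lt_of_le_of_lt (le_max_left _ _) hx.1)
      have hx2 : ξ₂ ≤ x := le_of_lt (lt_of_le_of_lt (le_max_right _ _) hx.1)
      have hxξ : x ≤ ξ := by
        rcases le_or_gt ξ 0 with hc0 | hc0
        · exact absurd (hx.2.trans_le (max_le (le_refl 0) hc0)) (not_lt_of_ge hx0)
        · exact le_of_lt (hx.2.trans_le (le_of_eq (max_eq_right hc0.le)))
      rw [hkey x hx0]
      apply div_nonpos_of_nonpos_of_nonneg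
        (mul_nonpos_of_nonpos_of_nonneg (by linarith) (by linarith)) (by linarith)
  -- key: for any x ≥ 0, f x ≥ min (f 0) (f (max 0 ξ))
  have main : ∀ x : ℝ, 0 ≤ x → f 0 ≤ f x ∨ f (max 0 ξ) ≤ f x := by
    intro x hx
    rcases le_or_gt (max 0 ξ) x with hA | hA
    · right
      exact monoA (Set.self_mem_Ici) hA hA
    · rcases le_or_gt x ξ₂ with hB | hB
      · left
        have hξ₂0 : 0 ≤ ξ₂ := le_trans hx hB
        exact monoB ⟨le_refl 0, hξ₂0⟩ ⟨hx, hB⟩ hx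
      · right
        have hx2 : max 0 ξ₂ ≤ x := max_le hx hB.le
        exact monoC ⟨hx2, hA.le⟩ ⟨max_le_max (le_refl 0) hle, le_refl _⟩ hA.le
  constructor
  · intro hξpos hfξ x hx
    have hmax : max 0 ξ = ξ := max_eq_right hξpos.le
    rcases main x hx with h1 | h1
    · calc f ξ ≤ y^2/2 := hfξ
        _ = f 0 := hf0.symm
        _ ≤ f x := h1
    · rw [hmax] at h1; exact h1
  · intro hcase x hx
    rcases hcase with hξ0 | hfξ
    · have hmax : max 0 ξ = 0 := max_eq_left hξ0
      rcases main x hx with h1 | h1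
      · exact h1
      · rw [hmax] at h1; exact h1
    · rcases le_or_gt ξ 0 with hξ0 | hξpos
      · have hmax : max 0 ξ = 0 := max_eq_left hξ0
        rcases main x hx with h1 | h1
        · exact h1
        · rw [hmax] at h1; exact h1
      · have hmax : max 0 ξ = ξ := max_eq_right hξpos.le
        rcases main x hx with h1 | h1
        · exact h1
        · rw [hmax] at h1
          calc f 0 = y^2/2 := hf0
            _ ≤ f ξ := hfξ.le
            _ ≤ f x := h1
end

section
/- Let y ∈ ℝ^d with y ≠ 0, and let τ ≥ 0. Define g(w) = (1/2)‖y − w‖₂² + τ·log(1 + ‖w‖₂) for w ∈ ℝ^d. Then every global minimizer w* of g over ℝ^d is a nonnegative scalar multiple of y, namely w* = (c/‖y‖₂)·y where c = ‖w*‖₂ ∈ [0, ‖y‖₂] is a global minimizer over [0, ∞) of the scalar function f(x) = (1/2)(x − ‖y‖₂)² + τ·log(1 + x); moreover min_{w ∈ ℝ^d} g(w) = min_{x ≥ 0} f(x). -/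
/-- Reduction of the vector `ℓ_{2,log}`-shrinkage problem to a scalar problem: every global
minimizer `w` of `g(w) = (1/2)‖y-w‖² + τ log(1+‖w‖)` is a nonnegative multiple of `y`,
`w = (‖w‖/‖y‖) • y` with `‖w‖ ∈ [0, ‖y‖]`, `‖w‖` globally minimizes
`f(x) = (1/2)(x-‖y‖)² + τ log(1+x)` over `[0,∞)`, and the two minimum values agree. -/
theorem stmt4 (d : ℕ) (y : EuclideanSpace ℝ (Fin d)) (hy : y ≠ 0) (τ : ℝ) (hτ : 0 ≤ τ)
    (g : EuclideanSpace ℝ (Fin d) → ℝ)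
    (hg : ∀ w, g w = (1/2) * ‖y - w‖^2 + τ * Real.log (1 + ‖w‖))
    (f : ℝ → ℝ) (hf : ∀ x : ℝ, f x = (1/2) * (x - ‖y‖)^2 + τ * Real.log (1 + x))
    (w : EuclideanSpace ℝ (Fin d)) (hw : ∀ w', g w ≤ g w') :
    w = (‖w‖ / ‖y‖) • y ∧ ‖w‖ ≤ ‖y‖ ∧
    (∀ x : ℝ, 0 ≤ x → f ‖w‖ ≤ f x) ∧ g w = f ‖w‖ := by
  have ha : (0:ℝ) < ‖y‖ := norm_pos_iff.mpr hy
  -- key: the scaled test vector realizes f x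
  have key : ∀ x : ℝ, 0 ≤ x → g ((x / ‖y‖) • y) = f x := by
    intro x hx
    rw [hg, hf]
    have h1 : ‖(x / ‖y‖) • y‖ = x := by
      rw [norm_smul, Real.norm_eq_abs, abs_div, abs_norm, div_mul_cancel₀ _ ha.ne',
        abs_of_nonneg hx]
    have h2 : ‖y - (x / ‖y‖) • y‖ ^ 2 = (x - ‖y‖) ^ 2 := by
      have : y - (x / ‖y‖) • y = (1 - x / ‖y‖) • y := by
        rw [sub_smul, one_smul]
      rw [this, norm_smul, Real.norm_eq_abs, mul_pow, sq_abs]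
      field_simp
      ring
    rw [h1, h2]
  -- g w ≤ f x for all x ≥ 0
  have hgle : ∀ x : ℝ, 0 ≤ x → g w ≤ f x := fun x hx => (key x hx) ▸ hw _
  -- lower bound: f ‖w‖ ≤ g w
  have hCS : inner ℝ y w ≤ ‖y‖ * ‖w‖ := real_inner_le_norm y w
  have hexp : ‖y - w‖ ^ 2 = ‖y‖ ^ 2 - 2 * inner ℝ y w + ‖w‖ ^ 2 := norm_sub_sq_real y w
  have hlow : f ‖w‖ ≤ g w := by
    rw [hf, hg]
    nlinarith [hCS, hexp]
  -- equality of values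
  have heq : g w = f ‖w‖ := le_antisymm (hgle _ (norm_nonneg w)) hlow
  -- Cauchy-Schwarz equality
  have hinner : (inner ℝ y w : ℝ) = ‖y‖ * ‖w‖ := by
    have := heq
    rw [hf, hg] at this
    nlinarith [hexp]
  have hcol : (‖w‖ : ℝ) • y = ‖y‖ • w := (inner_eq_norm_mul_iff_real).mp hinner
  have hwy : w = (‖w‖ / ‖y‖) • y := by
    rw [div_eq_mul_inv, mul_comm, mul_smul, hcol, inv_smul_smul₀ ha.ne']
  -- ‖w‖ ≤ ‖y‖
  have hle : ‖w‖ ≤ ‖y‖ := by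
    by_contra h
    push_neg at h
    have h1 : f ‖w‖ ≤ f ‖y‖ := heq ▸ hgle _ ha.le
    rw [hf, hf] at h1
    have hlog : Real.log (1 + ‖y‖) ≤ Real.log (1 + ‖w‖) :=
      Real.log_le_log (by linarith) (by linarith)
    nlinarith [mul_le_mul_of_nonneg_left hlog hτ]
  exact ⟨hwy, hle, fun x hx => heq ▸ hgle x hx, heq⟩
end

section
/- (ℓ_{2,log}-shrinkage operator) Let Y ∈ ℝ^{d×n} with columns y₁, …, y_n and let τ ≥ 0. For each i, set f_i(x) = (1/2)(x − ‖y_i‖₂)² + τ·log(1 + x) and, when (1 + ‖y_i‖₂)² ≥ 4τ, set ξ_i = (‖y_i‖₂ − 1)/2 + √((1 + ‖y_i‖₂)²/4 − τ). Define W* ∈ ℝ^{d×n} column-wise by w*_i = (ξ_i/‖y_i‖₂)·y_i if (1 + ‖y_i‖₂)² > 4τ, ξ_i > 0, and f_i(ξ_i) ≤ ‖y_i‖₂²/2, and w*_i = 0 otherwise. Then W* is a global minimizer over ℝ^{d×n} of the problem min_W (1/2)‖Y − W‖_F² + τ·‖W‖_{2,log}. -/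
noncomputable def Fobj (a τ x : ℝ) : ℝ := (1/2)*(x-a)^2 + τ * Real.log (1+x)

lemma hasDerivAt_Fobj (a τ x : ℝ) (hx : (-1:ℝ) < x) :
    HasDerivAt (Fobj a τ) (((x-a)*(1+x) + τ)/(1+x)) x := by
  have h1 : (1:ℝ)+x ≠ 0 := by linarith
  have hlog : HasDerivAt (fun y : ℝ => Real.log (1+y)) (1/(1+x)) x := by
    have := (Real.hasDerivAt_log h1).comp x ((hasDerivAt_id x).const_add 1)
    simpa [one_div, Function.comp_def] using this
  have hsq : HasDerivAt (fun y : ℝ => (1/2)*(y-a)^2) (x - a) x := by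
    have := (((hasDerivAt_id x).sub_const a).pow 2).const_mul (1/2 : ℝ)
    exact this.congr_deriv (by norm_num <;> ring)
  have := hsq.add (hlog.const_mul τ)
  have h2 : (x - a) + τ * (1/(1+x)) = ((x-a)*(1+x) + τ)/(1+x) := by field_simp
  rw [← h2]
  exact this

lemma Fobj_mono (a τ l u : ℝ) (hl : (0:ℝ) ≤ l) (hlu : l ≤ u)
    (h : ∀ y, l ≤ y → y ≤ u → 0 ≤ (y-a)*(1+y)+τ) :
    Fobj a τ l ≤ Fobj a τ u := by
  have hdiff : ∀ y ∈ Set.Icc l u, DifferentiableAt ℝ (Fobj a τ) y := by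
    intro y hy
    exact (hasDerivAt_Fobj a τ y (by have := hy.1; linarith)).differentiableAt
  have hmono : MonotoneOn (Fobj a τ) (Set.Icc l u) := by
    apply monotoneOn_of_deriv_nonneg (convex_Icc l u)
    · exact fun y hy => (hdiff y hy).continuousAt.continuousWithinAt
    · intro y hy
      rw [interior_Icc] at hy
      exact (hdiff y ⟨hy.1.le, hy.2.le⟩).differentiableWithinAt
    · intro y hy
      rw [interior_Icc] at hy
      rw [(hasDerivAt_Fobj a τ y (by have := hy.1; linarith)).deriv]
      apply div_nonneg (h y hy.1.le hy.2.le) (by have := hy.1; linarith)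
  exact hmono (Set.left_mem_Icc.mpr hlu) (Set.right_mem_Icc.mpr hlu) hlu

lemma Fobj_anti (a τ l u : ℝ) (hl : (0:ℝ) ≤ l) (hlu : l ≤ u)
    (h : ∀ y, l ≤ y → y ≤ u → (y-a)*(1+y)+τ ≤ 0) :
    Fobj a τ u ≤ Fobj a τ l := by
  have hdiff : ∀ y ∈ Set.Icc l u, DifferentiableAt ℝ (Fobj a τ) y := by
    intro y hy
    exact (hasDerivAt_Fobj a τ y (by have := hy.1; linarith)).differentiableAt
  have hmono : AntitoneOn (Fobj a τ) (Set.Icc l u) := by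
    apply antitoneOn_of_deriv_nonpos (convex_Icc l u)
    · exact fun y hy => (hdiff y hy).continuousAt.continuousWithinAt
    · intro y hy
      rw [interior_Icc] at hy
      exact (hdiff y ⟨hy.1.le, hy.2.le⟩).differentiableWithinAt
    · intro y hy
      rw [interior_Icc] at hy
      rw [(hasDerivAt_Fobj a τ y (by have := hy.1; linarith)).deriv]
      apply div_nonpos_of_nonpos_of_nonneg (h y hy.1.le hy.2.le) (by have := hy.1; linarith)
  exact hmono (Set.left_mem_Icc.mpr hlu) (Set.right_mem_Icc.mpr hlu) hlu

lemma Fobj_zero (a τ : ℝ) : Fobj a τ 0 = a^2/2 := by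
  simp [Fobj]; ring

lemma scalarA (a τ ξ : ℝ) (ha : 0 ≤ a) (hτ : 0 ≤ τ)
    (hξ : ξ = (a-1)/2 + Real.sqrt ((1+a)^2/4 - τ))
    (hD : (1+a)^2 > 4*τ) (hξpos : 0 < ξ) (hfξ : Fobj a τ ξ ≤ a^2/2) :
    ∀ x, 0 ≤ x → Fobj a τ ξ ≤ Fobj a τ x := by
  set s := Real.sqrt ((1+a)^2/4 - τ) with hsdef
  have hs : s^2 = (1+a)^2/4 - τ := Real.sq_sqrt (by linarith)
  have hs0 : 0 ≤ s := Real.sqrt_nonneg _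
  set r := a - 1 - ξ with hrdef
  have hfact : ∀ y : ℝ, (y-a)*(1+y)+τ = (y-r)*(y-ξ) := by
    intro y
    rw [hrdef, hξ]
    linear_combination hs
  have hrξ : r ≤ ξ := by rw [hrdef, hξ]; linarith
  intro x hx
  rcases le_or_gt ξ x with h1 | h1
  · apply Fobj_mono a τ ξ x hξpos.le h1
    intro y hy1 hy2
    rw [hfact]
    exact mul_nonneg (by linarith) (by linarith)
  · rcases le_or_gt r x with h2 | h2
    · apply Fobj_anti a τ x ξ hx h1.le
      intro y hy1 hy2
      rw [hfact]
      exact mul_nonpos_of_nonneg_of_nonpos (by linarith) (by linarith)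
    · calc Fobj a τ ξ ≤ a^2/2 := hfξ
        _ = Fobj a τ 0 := (Fobj_zero a τ).symm
        _ ≤ Fobj a τ x := by
            apply Fobj_mono a τ 0 x le_rfl hx
            intro y hy1 hy2
            rw [hfact]
            have h3 := mul_nonneg (show (0:ℝ) ≤ r - y by linarith) (show (0:ℝ) ≤ ξ - y by linarith)
            nlinarith

lemma scalarB (a τ ξ : ℝ) (ha : 0 ≤ a) (hτ : 0 ≤ τ)
    (hξ : ξ = (a-1)/2 + Real.sqrt ((1+a)^2/4 - τ))
    (hneg : ¬((1+a)^2 > 4*τ ∧ 0 < ξ ∧ Fobj a τ ξ ≤ a^2/2)) :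
    ∀ x, 0 ≤ x → a^2/2 ≤ Fobj a τ x := by
  intro x hx
  rw [← Fobj_zero a τ]
  by_cases hD : (1+a)^2 > 4*τ
  · set s := Real.sqrt ((1+a)^2/4 - τ) with hsdef
    have hs : s^2 = (1+a)^2/4 - τ := Real.sq_sqrt (by linarith)
    have hs0 : 0 ≤ s := Real.sqrt_nonneg _
    set r := a - 1 - ξ with hrdef
    have hfact : ∀ y : ℝ, (y-a)*(1+y)+τ = (y-r)*(y-ξ) := by
      intro y
      rw [hrdef, hξ]
      linear_combination hs
    have hrξ : r ≤ ξ := by rw [hrdef, hξ]; linarith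
    by_cases hξpos : 0 < ξ
    · have hfξ : a^2/2 < Fobj a τ ξ := by
        by_contra hc
        push_neg at hc
        exact hneg ⟨hD, hξpos, hc⟩
      rcases le_or_gt ξ x with h1 | h1
      · have : Fobj a τ ξ ≤ Fobj a τ x := by
          apply Fobj_mono a τ ξ x hξpos.le h1
          intro y hy1 hy2
          rw [hfact]
          exact mul_nonneg (by linarith) (by linarith)
        rw [Fobj_zero a τ]; linarith
      · rcases le_or_gt r x with h2 | h2
        · have : Fobj a τ ξ ≤ Fobj a τ x := by
            apply Fobj_anti a τ x ξ hx h1.le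
            intro y hy1 hy2
            rw [hfact]
            exact mul_nonpos_of_nonneg_of_nonpos (by linarith) (by linarith)
          rw [Fobj_zero a τ]; linarith
        · apply Fobj_mono a τ 0 x le_rfl hx
          intro y hy1 hy2
          rw [hfact]
          have h3 := mul_nonneg (show (0:ℝ) ≤ r - y by linarith) (show (0:ℝ) ≤ ξ - y by linarith)
          nlinarith
    · push_neg at hξpos
      apply Fobj_mono a τ 0 x le_rfl hx
      intro y hy1 hy2
      rw [hfact]
      exact mul_nonneg (by linarith) (by linarith)
  · push_neg at hD
    apply Fobj_mono a τ 0 x le_rfl hx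
    intro y hy1 hy2
    nlinarith [sq_nonneg (y - (a-1)/2)]

open Finset in
lemma colbound (d : ℕ) (y w : Fin d → ℝ) (τ a : ℝ)
    (ha : a = Real.sqrt (∑ j, (y j)^2)) :
    Fobj a τ (Real.sqrt (∑ j, (w j)^2)) ≤
      (1/2) * ∑ j, (y j - w j)^2 + τ * Real.log (1 + Real.sqrt (∑ j, (w j)^2)) := by
  set t := Real.sqrt (∑ j, (w j)^2) with htdef
  have ht0 : 0 ≤ t := Real.sqrt_nonneg _
  have ha0 : 0 ≤ a := ha ▸ Real.sqrt_nonneg _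
  have ht2 : t^2 = ∑ j, (w j)^2 := Real.sq_sqrt (Finset.sum_nonneg fun j _ => sq_nonneg _)
  have ha2 : a^2 = ∑ j, (y j)^2 := ha ▸ Real.sq_sqrt (Finset.sum_nonneg fun j _ => sq_nonneg _)
  have hCS : (∑ j, y j * w j) ≤ a * t := by
    have h1 : (∑ j, y j * w j)^2 ≤ (a*t)^2 := by
      rw [mul_pow, ha2, ht2]
      exact Finset.sum_mul_sq_le_sq_mul_sq _ _ _
    nlinarith [mul_nonneg ha0 ht0]
  have hexp : ∑ j, (y j - w j)^2
      = (∑ j, (y j)^2) - 2*(∑ j, y j * w j) + (∑ j, (w j)^2) := by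
    have h : ∀ j ∈ Finset.univ, (y j - w j)^2 = (y j)^2 - 2*(y j * w j) + (w j)^2 :=
      fun j _ => by ring
    rw [Finset.sum_congr rfl h, Finset.sum_add_distrib, Finset.sum_sub_distrib, ← Finset.mul_sum]
  have hkey : (t - a)^2 ≤ ∑ j, (y j - w j)^2 := by
    rw [hexp, ← ha2, ← ht2]
    nlinarith
  unfold Fobj
  nlinarith

open Finset in
/-- (`ℓ_{2,log}`-shrinkage operator, Theorem 1.) The matrix `W` defined column-wise by
`wᵢ = (ξᵢ/‖yᵢ‖₂) yᵢ` when `(1+‖yᵢ‖₂)² > 4τ`, `ξᵢ > 0` and `fᵢ(ξᵢ) ≤ ‖yᵢ‖₂²/2`, and `wᵢ = 0`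
otherwise, is a global minimizer of `W ↦ (1/2)‖Y-W‖_F² + τ‖W‖_{2,log}`. -/
theorem stmt6 (d n : ℕ) (Y : Matrix (Fin d) (Fin n) ℝ) (τ : ℝ) (hτ : 0 ≤ τ)
    (ynorm : Fin n → ℝ) (hynorm : ∀ i, ynorm i = Real.sqrt (∑ j, (Y j i)^2))
    (f : Fin n → ℝ → ℝ)
    (hf : ∀ i (x : ℝ), f i x = (1/2) * (x - ynorm i)^2 + τ * Real.log (1 + x))
    (ξ : Fin n → ℝ)
    (hξ : ∀ i, ξ i = (ynorm i - 1)/2 + Real.sqrt ((1 + ynorm i)^2/4 - τ))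
    (W : Matrix (Fin d) (Fin n) ℝ)
    (hW1 : ∀ i, (1 + ynorm i)^2 > 4 * τ → ξ i > 0 → f i (ξ i) ≤ (ynorm i)^2/2 →
      ∀ j, W j i = (ξ i / ynorm i) * Y j i)
    (hW2 : ∀ i, ¬((1 + ynorm i)^2 > 4 * τ ∧ ξ i > 0 ∧ f i (ξ i) ≤ (ynorm i)^2/2) →
      ∀ j, W j i = 0) :
    ∀ W' : Matrix (Fin d) (Fin n) ℝ,
      (1/2) * ∑ i, ∑ j, (Y j i - W j i)^2
        + τ * ∑ i, Real.log (1 + Real.sqrt (∑ j, (W j i)^2)) ≤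
      (1/2) * ∑ i, ∑ j, (Y j i - W' j i)^2
        + τ * ∑ i, Real.log (1 + Real.sqrt (∑ j, (W' j i)^2)) := by
  intro W'
  have hsum : ∀ V : Matrix (Fin d) (Fin n) ℝ,
      (1/2) * ∑ i, ∑ j, (Y j i - V j i)^2
        + τ * ∑ i, Real.log (1 + Real.sqrt (∑ j, (V j i)^2))
      = ∑ i, ((1/2) * ∑ j, (Y j i - V j i)^2
        + τ * Real.log (1 + Real.sqrt (∑ j, (V j i)^2))) := by
    intro V
    rw [Finset.mul_sum, Finset.mul_sum, ← Finset.sum_add_distrib]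
  rw [hsum W, hsum W']
  apply Finset.sum_le_sum
  intro i _
  set a := ynorm i with hadef
  have ha : a = Real.sqrt (∑ j, (Y j i)^2) := hynorm i
  have ha0 : 0 ≤ a := ha ▸ Real.sqrt_nonneg _
  have ha2 : a^2 = ∑ j, (Y j i)^2 := ha ▸ Real.sq_sqrt (Finset.sum_nonneg fun j _ => sq_nonneg _)
  have hfF : ∀ x, f i x = Fobj a τ x := fun x => hf i x
  have hRHS : Fobj a τ (Real.sqrt (∑ j, (W' j i)^2)) ≤
      (1/2) * ∑ j, (Y j i - W' j i)^2
        + τ * Real.log (1 + Real.sqrt (∑ j, (W' j i)^2)) :=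
    colbound d (fun j => Y j i) (fun j => W' j i) τ a ha
  have ht0 : 0 ≤ Real.sqrt (∑ j, (W' j i)^2) := Real.sqrt_nonneg _
  by_cases hcond : (1 + a)^2 > 4 * τ ∧ ξ i > 0 ∧ f i (ξ i) ≤ a^2/2
  · obtain ⟨h1, h2, h3⟩ := hcond
    have haP : 0 < a := by
      rcases ha0.lt_or_eq with h | h
      · exact h
      · exfalso
        have hs : Real.sqrt ((1 + a)^2/4 - τ) ≤ 1/2 := by
          rw [← h]
          calc Real.sqrt ((1 + (0:ℝ))^2/4 - τ) ≤ Real.sqrt (1/4) :=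
                Real.sqrt_le_sqrt (by linarith)
            _ = 1/2 := by
                rw [show (1/4 : ℝ) = (1/2)^2 by norm_num, Real.sqrt_sq (by norm_num)]
        have hx := hξ i
        rw [← hadef] at hx
        linarith
    have hWcol := hW1 i h1 h2 h3
    have hsq : ∑ j, (Y j i - W j i)^2 = (ξ i - a)^2 := by
      have h4 : ∀ j ∈ Finset.univ, (Y j i - W j i)^2 = (1 - ξ i / a)^2 * (Y j i)^2 := by
        intro j _
        rw [hWcol j]
        ring
      rw [Finset.sum_congr rfl h4, ← Finset.mul_sum, ← ha2]
      field_simp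
      ring
    have hnorm : Real.sqrt (∑ j, (W j i)^2) = ξ i := by
      have h4 : ∀ j ∈ Finset.univ, (W j i)^2 = (ξ i / a)^2 * (Y j i)^2 := by
        intro j _
        rw [hWcol j]
        ring
      rw [Finset.sum_congr rfl h4, ← Finset.mul_sum, ← ha2]
      rw [show (ξ i / a)^2 * a^2 = (ξ i)^2 by field_simp]
      exact Real.sqrt_sq h2.le
    have hLHS : (1/2) * ∑ j, (Y j i - W j i)^2
        + τ * Real.log (1 + Real.sqrt (∑ j, (W j i)^2)) = Fobj a τ (ξ i) := by
      rw [hsq, hnorm, Fobj]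
    rw [hLHS]
    calc Fobj a τ (ξ i) ≤ Fobj a τ (Real.sqrt (∑ j, (W' j i)^2)) := by
          apply scalarA a τ (ξ i) ha0 hτ (hξ i) h1 h2 ((hfF (ξ i)) ▸ h3) _ ht0
      _ ≤ _ := hRHS
  · have hWcol := hW2 i hcond
    have hLHS : (1/2) * ∑ j, (Y j i - W j i)^2
        + τ * Real.log (1 + Real.sqrt (∑ j, (W j i)^2)) = a^2/2 := by
      have h4 : ∀ j ∈ Finset.univ, (Y j i - W j i)^2 = (Y j i)^2 := by
        intro j _
        rw [hWcol j]
        ring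
      have h5 : ∀ j ∈ Finset.univ, (W j i)^2 = (0:ℝ) := by
        intro j _
        rw [hWcol j]
        ring
      rw [Finset.sum_congr rfl h4, Finset.sum_congr rfl h5, ← ha2]
      simp
      ring
    rw [hLHS]
    have hcond' : ¬((1 + a)^2 > 4*τ ∧ 0 < ξ i ∧ Fobj a τ (ξ i) ≤ a^2/2) := by
      intro ⟨c1, c2, c3⟩
      exact hcond ⟨c1, c2, (hfF (ξ i)) ▸ c3⟩
    calc a^2/2 ≤ Fobj a τ (Real.sqrt (∑ j, (W' j i)^2)) :=
          scalarB a τ (ξ i) ha0 hτ (hξ i) hcond' _ ht0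
      _ ≤ _ := hRHS
end

section
/- Let y ∈ ℝ and τ ≥ 0, and consider the scalar shrinkage problem min_{t ∈ ℝ} (1/2)(t − y)² + τ·log(1 + |t|). Then every global minimizer t* satisfies t* = sign(y)·x* where x* is a global minimizer over [0, ∞) of f(x) = (1/2)(x − |y|)² + τ·log(1 + x); in particular, with ξ = (|y| − 1)/2 + √((1 + |y|)²/4 − τ), the point t* = sign(y)·ξ is a global minimizer when (1 + |y|)² > 4τ, ξ > 0 and f(ξ) ≤ y²/2, and t* = 0 is a global minimizer otherwise. -/
private lemma hasDerivF (a τ x : ℝ) (hx : (0:ℝ) ≤ x) :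
    HasDerivAt (fun z => (1/2) * (z - a)^2 + τ * Real.log (1 + z))
      (((x - a) * (1 + x) + τ) / (1 + x)) x := by
  have h1 : (1:ℝ) + x ≠ 0 := by linarith
  have hd1 : HasDerivAt (fun z : ℝ => (1/2) * (z - a)^2) (x - a) x := by
    have := (((hasDerivAt_id x).sub_const a).pow 2).const_mul (1/2 : ℝ)
    refine this.congr_deriv ?_
    simp [id_eq]
  have hd2 : HasDerivAt (fun z : ℝ => Real.log (1 + z)) ((1+x)⁻¹) x := by
    have h := (Real.hasDerivAt_log h1).comp x
      ((hasDerivAt_const x (1:ℝ)).add (hasDerivAt_id x))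
    exact h.congr_deriv (by simp)
  have := hd1.add (hd2.const_mul τ)
  refine this.congr_deriv ?_
  field_simp

private lemma upF (a τ c d : ℝ) (hc : 0 ≤ c) (hcd : c ≤ d)
    (hq : ∀ x ∈ Set.Icc c d, 0 ≤ (x - a) * (1 + x) + τ) :
    (1/2) * (c - a)^2 + τ * Real.log (1 + c) ≤ (1/2) * (d - a)^2 + τ * Real.log (1 + d) := by
  have h := monotoneOn_of_deriv_nonneg (convex_Icc c d)
    (f := fun z => (1/2) * (z - a)^2 + τ * Real.log (1 + z))
    (fun x hx => (hasDerivF a τ x (le_trans hc hx.1)).continuousAt.continuousWithinAt)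
    (fun x hx => by
      rw [interior_Icc] at hx
      exact (hasDerivF a τ x (le_trans hc hx.1.le)).differentiableAt.differentiableWithinAt)
    (fun x hx => by
      rw [interior_Icc] at hx
      have hx0 : 0 ≤ x := le_trans hc hx.1.le
      rw [(hasDerivF a τ x hx0).deriv]
      exact div_nonneg (hq x ⟨hx.1.le, hx.2.le⟩) (by linarith))
  exact h ⟨le_refl c, hcd⟩ ⟨hcd, le_refl d⟩ hcd

private lemma downF (a τ c d : ℝ) (hc : 0 ≤ c) (hcd : c ≤ d)
    (hq : ∀ x ∈ Set.Icc c d, (x - a) * (1 + x) + τ ≤ 0) :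
    (1/2) * (d - a)^2 + τ * Real.log (1 + d) ≤ (1/2) * (c - a)^2 + τ * Real.log (1 + c) := by
  have h := antitoneOn_of_deriv_nonpos (convex_Icc c d)
    (f := fun z => (1/2) * (z - a)^2 + τ * Real.log (1 + z))
    (fun x hx => (hasDerivF a τ x (le_trans hc hx.1)).continuousAt.continuousWithinAt)
    (fun x hx => by
      rw [interior_Icc] at hx
      exact (hasDerivF a τ x (le_trans hc hx.1.le)).differentiableAt.differentiableWithinAt)
    (fun x hx => by
      rw [interior_Icc] at hx
      have hx0 : 0 ≤ x := le_trans hc hx.1.le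
      rw [(hasDerivF a τ x hx0).deriv]
      exact div_nonpos_of_nonpos_of_nonneg (hq x ⟨hx.1.le, hx.2.le⟩) (by linarith))
  exact h ⟨le_refl c, hcd⟩ ⟨hcd, le_refl d⟩ hcd

private lemma F0 (a τ : ℝ) : (1/2) * ((0:ℝ) - a)^2 + τ * Real.log (1 + 0) = a^2/2 := by
  simp [Real.log_one]
  ring

private lemma lemA (a τ : ℝ) (ha : 0 ≤ a) (hτ : 0 ≤ τ)
    (ξ : ℝ) (hξ : ξ = (a - 1)/2 + Real.sqrt ((1 + a)^2/4 - τ))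
    (hD : (1 + a)^2 > 4 * τ) (hpos : ξ > 0)
    (hmin : (1/2) * (ξ - a)^2 + τ * Real.log (1 + ξ) ≤ a^2/2) :
    ∀ x, 0 ≤ x → (1/2) * (ξ - a)^2 + τ * Real.log (1 + ξ)
      ≤ (1/2) * (x - a)^2 + τ * Real.log (1 + x) := by
  intro x hx
  set s := Real.sqrt ((1 + a)^2/4 - τ) with hs
  have hs2 : s^2 = (1 + a)^2/4 - τ := Real.sq_sqrt (by linarith)
  have hsnn : 0 ≤ s := Real.sqrt_nonneg _
  set η := (a - 1)/2 - s with hη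
  have hfact : ∀ z : ℝ, (z - a) * (1 + z) + τ = (z - ξ) * (z - η) := by
    intro z
    rw [hξ, hη]
    nlinarith [hs2]
  have hηξ : η ≤ ξ := by rw [hξ, hη]; linarith
  rcases le_or_gt ξ x with h | h
  · exact upF a τ ξ x hpos.le h (fun z hz => by
      rw [hfact z]
      exact mul_nonneg (by linarith [hz.1]) (by linarith [hz.1]))
  · rcases le_or_gt η x with h2 | h2
    · exact downF a τ x ξ hx h.le (fun z hz => by
        rw [hfact z]
        exact mul_nonpos_of_nonpos_of_nonneg (by linarith [hz.2]) (by linarith [hz.1]))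
    · have h0 : (1/2) * ((0:ℝ) - a)^2 + τ * Real.log (1 + 0)
          ≤ (1/2) * (x - a)^2 + τ * Real.log (1 + x) :=
        upF a τ 0 x le_rfl hx (fun z hz => by
          rw [hfact z]
          nlinarith [mul_nonneg (show (0:ℝ) ≤ ξ - z by linarith [hz.2])
            (show (0:ℝ) ≤ η - z by linarith [hz.2])])
      rw [F0] at h0
      linarith

private lemma lemB (a τ : ℝ) (ha : 0 ≤ a) (hτ : 0 ≤ τ)
    (ξ : ℝ) (hξ : ξ = (a - 1)/2 + Real.sqrt ((1 + a)^2/4 - τ))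
    (hn : ¬((1 + a)^2 > 4 * τ ∧ ξ > 0 ∧
        (1/2) * (ξ - a)^2 + τ * Real.log (1 + ξ) ≤ a^2/2)) :
    ∀ x, 0 ≤ x → a^2/2 ≤ (1/2) * (x - a)^2 + τ * Real.log (1 + x) := by
  intro x hx
  by_cases hD : (1 + a)^2 > 4 * τ
  · set s := Real.sqrt ((1 + a)^2/4 - τ) with hs
    have hs2 : s^2 = (1 + a)^2/4 - τ := Real.sq_sqrt (by linarith)
    have hsnn : 0 ≤ s := Real.sqrt_nonneg _
    set η := (a - 1)/2 - s with hη
    have hfact : ∀ z : ℝ, (z - a) * (1 + z) + τ = (z - ξ) * (z - η) := by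
      intro z
      rw [hξ, hη]
      nlinarith [hs2]
    have hηξ : η ≤ ξ := by rw [hξ, hη]; linarith
    by_cases hpos : ξ > 0
    · push_neg at hn
      have hgt : a^2/2 < (1/2) * (ξ - a)^2 + τ * Real.log (1 + ξ) := hn hD hpos
      rcases le_or_gt ξ x with h | h
      · have := upF a τ ξ x hpos.le h (fun z hz => by
          rw [hfact z]
          exact mul_nonneg (by linarith [hz.1]) (by linarith [hz.1]))
        linarith
      · rcases le_or_gt η x with h2 | h2
        · have := downF a τ x ξ hx h.le (fun z hz => by
            rw [hfact z]
            exact mul_nonpos_of_nonpos_of_nonneg (by linarith [hz.2]) (by linarith [hz.1]))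
          linarith
        · have h0 := upF a τ 0 x le_rfl hx (fun z hz => by
            rw [hfact z]
            nlinarith [mul_nonneg (show (0:ℝ) ≤ ξ - z by linarith [hz.2])
              (show (0:ℝ) ≤ η - z by linarith [hz.2])])
          rw [F0] at h0
          linarith
    · push_neg at hpos
      have h0 := upF a τ 0 x le_rfl hx (fun z hz => by
        rw [hfact z]
        exact mul_nonneg (by linarith [hz.1]) (by linarith [hz.1]))
      rw [F0] at h0
      exact h0
  · push_neg at hD
    have h0 := upF a τ 0 x le_rfl hx (fun z _ => by nlinarith [sq_nonneg (z - (a-1)/2)])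
    rw [F0] at h0
    exact h0

/-- The scalar (`d = 1`) instance of the `ℓ_{2,log}`-shrinkage: every global minimizer `t` of
`g(t) = (1/2)(t-y)² + τ log(1+|t|)` is `sign(y)` times a global minimizer of
`f(x) = (1/2)(x-|y|)² + τ log(1+x)` over `[0,∞)`; with
`ξ = (|y|-1)/2 + √((1+|y|)²/4 - τ)`, the point `sign(y)·ξ` is a global minimizer when
`(1+|y|)² > 4τ`, `ξ > 0` and `f(ξ) ≤ y²/2`, and `0` is a global minimizer otherwise. -/
theorem stmt11 (y τ : ℝ) (hτ : 0 ≤ τ)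
    (g : ℝ → ℝ) (hg : ∀ t : ℝ, g t = (1/2) * (t - y)^2 + τ * Real.log (1 + |t|))
    (f : ℝ → ℝ) (hf : ∀ x : ℝ, f x = (1/2) * (x - |y|)^2 + τ * Real.log (1 + x))
    (ξ : ℝ) (hξ : ξ = (|y| - 1)/2 + Real.sqrt ((1 + |y|)^2/4 - τ)) :
    (∀ t : ℝ, (∀ t', g t ≤ g t') →
      t = Real.sign y * |t| ∧ ∀ x : ℝ, 0 ≤ x → f |t| ≤ f x) ∧
    ((1 + |y|)^2 > 4 * τ ∧ ξ > 0 ∧ f ξ ≤ y^2/2 →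
      ∀ t : ℝ, g (Real.sign y * ξ) ≤ g t) ∧
    (¬((1 + |y|)^2 > 4 * τ ∧ ξ > 0 ∧ f ξ ≤ y^2/2) →
      ∀ t : ℝ, g 0 ≤ g t) := by
  have hay : |y|^2 = y^2 := sq_abs y
  have g_ge : ∀ t : ℝ, f |t| ≤ g t := by
    intro t
    rw [hg t, hf |t|]
    have h1 : t * y ≤ |t| * |y| := by rw [← abs_mul]; exact le_abs_self _
    nlinarith [sq_abs t, sq_abs y]
  have g_sign_eq : y ≠ 0 → ∀ x : ℝ, 0 ≤ x → g (Real.sign y * x) = f x := by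
    intro hy x hx
    rcases hy.lt_or_gt with h | h
    · rw [Real.sign_of_neg h, hg, hf]
      rw [abs_mul, abs_neg, abs_one, one_mul, abs_of_nonneg hx, abs_of_neg h]
      ring_nf
    · rw [Real.sign_of_pos h, hg, hf]
      rw [one_mul, abs_of_nonneg hx, abs_of_pos h]
  have hg0 : g 0 = y^2/2 := by rw [hg]; simp [Real.log_one]; ring
  refine ⟨?_, ?_, ?_⟩
  · -- part 1
    intro t ht
    by_cases hy : y = 0
    · subst hy
      have ht0 : t = 0 := by
        have h1 := ht 0
        rw [hg t, hg 0] at h1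
        norm_num [Real.log_one] at h1
        have h2 : 0 ≤ Real.log (1 + |t|) :=
          Real.log_nonneg (by linarith [abs_nonneg t])
        have h3 : t^2 = 0 := by nlinarith [sq_nonneg t, mul_nonneg hτ h2]
        exact pow_eq_zero_iff two_ne_zero |>.mp h3
      constructor
      · simp [ht0, Real.sign_zero]
      · intro x hx
        rw [ht0, abs_zero, hf 0, hf x]
        have hl : 0 ≤ Real.log (1 + x) := Real.log_nonneg (by linarith)
        simp only [abs_zero, Real.log_one, add_zero]
        nlinarith [sq_nonneg x, mul_nonneg hτ hl]
    · have key : g t = f |t| := by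
        refine le_antisymm ?_ (g_ge t)
        have h := ht (Real.sign y * |t|)
        rwa [g_sign_eq hy |t| (abs_nonneg t)] at h
      have hty : t * y = |t| * |y| := by
        rw [hg t, hf |t|] at key
        nlinarith [sq_abs t, sq_abs y]
      constructor
      · rcases (show y ≠ 0 from hy).lt_or_gt with h | h
        · rw [Real.sign_of_neg h]
          rw [abs_of_neg h] at hty
          have h2 : (t + |t|) * y = 0 := by linear_combination hty
          rcases mul_eq_zero.mp h2 with h3 | h3
          · linarith
          · exact absurd h3 (ne_of_lt h)
        · rw [Real.sign_of_pos h]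
          rw [abs_of_pos h] at hty
          have h2 : (t - |t|) * y = 0 := by linear_combination hty
          rcases mul_eq_zero.mp h2 with h3 | h3
          · linarith
          · exact absurd h3 (ne_of_gt h)
      · intro x hx
        calc f |t| = g t := key.symm
          _ ≤ g (Real.sign y * x) := ht _
          _ = f x := g_sign_eq hy x hx
  · -- part 2
    rintro ⟨h1, h2, h3⟩ t
    rw [hf ξ] at h3
    rw [← hay] at h3
    have hA := lemA |y| τ (abs_nonneg y) hτ ξ hξ h1 h2 h3
    by_cases hy : y = 0
    · rw [Real.sign_eq_zero_iff.mpr hy, zero_mul, hg0, hg t, hy]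
      have hl : 0 ≤ Real.log (1 + |t|) := Real.log_nonneg (by linarith [abs_nonneg t])
      nlinarith [sq_nonneg t, mul_nonneg hτ hl]
    · calc g (Real.sign y * ξ) = f ξ := g_sign_eq hy ξ h2.le
        _ ≤ f |t| := by rw [hf ξ, hf |t|]; exact hA |t| (abs_nonneg t)
        _ ≤ g t := g_ge t
  · -- part 3
    intro hn t
    have hn' : ¬((1 + |y|)^2 > 4 * τ ∧ ξ > 0 ∧
        (1/2) * (ξ - |y|)^2 + τ * Real.log (1 + ξ) ≤ |y|^2/2) := by
      rintro ⟨a1, a2, a3⟩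
      refine hn ⟨a1, a2, ?_⟩
      rw [hf ξ, ← hay]
      exact a3
    have hB := lemB |y| τ (abs_nonneg y) hτ ξ hξ hn' |t| (abs_nonneg t)
    rw [← hf |t|] at hB
    calc g 0 = y^2/2 := hg0
      _ = |y|^2/2 := by rw [hay]
      _ ≤ f |t| := hB
      _ ≤ g t := g_ge t
end
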